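/- Let C be a Barr exact category and consider, in Ext(C), a commutative square φ̄ ∘ z_A = z_B ∘ φ whose four sides z_A : a → ā, z_B : b → b̄, φ : a → b and φ̄ : ā → b̄ are all double extensions, and where the codomain component of z_B is an identity morphism of C (so that b and b̄ have the same codomain). Then this square is a pushout in the category Ext(C) if and only if the induced commutative square in C between the domains of a, ā, b and b̄ (whose sides are the domain components of z_A, φ, φ̄ and z_B) is a pushout in C. -/

import Mathlib

open CategoryTheory CategoryTheory.Limits

universe v u

namespace Paper

variable {C : Type u} [Category.{v} C]

/-- `f` is a regular epimorphism. -/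
def IsRegEpi {X Y : C} (f : X ⟶ Y) : Prop := Nonempty (RegularEpi f)

/-- A regular category: a finitely complete category with coequalizers of kernel pairs in
which regular epimorphisms are stable under pullback. -/
class RegularCat (C : Type u) [Category.{v} C] [HasFiniteLimits C] : Prop where
  hasCoeqOfKernelPairs : ∀ {X Y : C} (f : X ⟶ Y),
    HasCoequalizer (pullback.fst f f) (pullback.snd f f)
  regEpiPullbackStable : ∀ {X Y Z : C} (f : X ⟶ Y) (g : Z ⟶ Y),
    IsRegEpi f → IsRegEpi (pullback.snd f g)

/-- An internal equivalence relation given by a parallel pair `r₁ r₂ : R ⟶ X`. -/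
structure IsEquivRel [HasFiniteLimits C] {R X : C} (r₁ r₂ : R ⟶ X) : Prop where
  jointlyMono : Mono (prod.lift r₁ r₂)
  refl : ∃ d : X ⟶ R, d ≫ r₁ = 𝟙 X ∧ d ≫ r₂ = 𝟙 X
  symm : ∃ s : R ⟶ R, s ≫ r₁ = r₂ ∧ s ≫ r₂ = r₁
  trans : ∃ t : pullback r₂ r₁ ⟶ R,
    t ≫ r₁ = pullback.fst r₂ r₁ ≫ r₁ ∧ t ≫ r₂ = pullback.snd r₂ r₁ ≫ r₂

/-- A Barr exact category: a regular category in which every internal equivalence relation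
is effective (i.e. is a kernel pair). -/
class BarrExact (C : Type u) [Category.{v} C] [HasFiniteLimits C] extends RegularCat C : Prop where
  equivRelEffective : ∀ {R X : C} (r₁ r₂ : R ⟶ X), IsEquivRel r₁ r₂ →
    ∃ (Y : C) (f : X ⟶ Y), IsKernelPair f r₁ r₂

section DoubleExt
variable [HasFiniteLimits C]

/-- A double extension: a commutative square `αt ≫ fB = fA ≫ αb` of regular epimorphisms
whose comparison morphism to the pullback is also a regular epimorphism. -/
structure IsDoubleExt {A₁ A₀ B₁ B₀ : C} (fA : A₁ ⟶ A₀) (fB : B₁ ⟶ B₀)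
    (αt : A₁ ⟶ B₁) (αb : A₀ ⟶ B₀) : Prop where
  w : αt ≫ fB = fA ≫ αb
  left : IsRegEpi fA
  right : IsRegEpi fB
  top : IsRegEpi αt
  bot : IsRegEpi αb
  comparison : IsRegEpi (pullback.lift fA αt w.symm : A₁ ⟶ pullback αb fB)

end DoubleExt

/-- The category `Ext C` of extensions: the full subcategory of the arrow category of `C`
determined by the regular epimorphisms. -/
abbrev ExtCat (C : Type u) [Category.{v} C] : Type max u v :=
  ObjectProperty.FullSubcategory (fun f : Arrow C => IsRegEpi f.hom)

/-- An object of `Ext C` from a regular epimorphism. -/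
def ExtCat.mk' {X Y : C} (f : X ⟶ Y) (hf : IsRegEpi f) : ExtCat C :=
  ⟨Arrow.mk f, hf⟩

/-- The top (domain) component of a morphism of `Ext C`. -/
def ExtCat.homLeft {f g : ExtCat C} (φ : f ⟶ g) : f.obj.left ⟶ g.obj.left :=
  CommaMorphism.left φ.hom

/-- The bottom (codomain) component of a morphism of `Ext C`. -/
def ExtCat.homRight {f g : ExtCat C} (φ : f ⟶ g) : f.obj.right ⟶ g.obj.right :=
  CommaMorphism.right φ.hom

lemma ExtCat.homLeft_comp {f g h : ExtCat C} (a : f ⟶ g) (b : g ⟶ h) :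
    ExtCat.homLeft (a ≫ b) = ExtCat.homLeft a ≫ ExtCat.homLeft b := rfl

lemma ExtCat.homRight_comp {f g h : ExtCat C} (a : f ⟶ g) (b : g ⟶ h) :
    ExtCat.homRight (a ≫ b) = ExtCat.homRight a ≫ ExtCat.homRight b := rfl

lemma ExtCat.hom_w {f g : ExtCat C} (φ : f ⟶ g) :
    ExtCat.homLeft φ ≫ g.obj.hom = f.obj.hom ≫ ExtCat.homRight φ :=
  CommaMorphism.w φ.hom

/-- A morphism of `Ext C` from a commutative square in `C`. -/
def ExtCat.homMk' {X₁ X₀ Y₁ Y₀ : C} {f : X₁ ⟶ X₀} {g : Y₁ ⟶ Y₀}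
    {hf : IsRegEpi f} {hg : IsRegEpi g}
    (u : X₁ ⟶ Y₁) (v : X₀ ⟶ Y₀) (w : u ≫ g = f ≫ v) :
    ExtCat.mk' f hf ⟶ ExtCat.mk' g hg :=
  ObjectProperty.homMk (Arrow.homMk (u := u) (v := v) w)

/-- A (commutative) square in `C`, with left vertical `left : A₁ ⟶ A₀`, right vertical
`right : B₁ ⟶ B₀`, top horizontal `top : A₁ ⟶ B₁` and bottom horizontal `bot : A₀ ⟶ B₀`. -/
structure Sq (C : Type u) [Category.{v} C] where
  A₁ : C
  A₀ : C
  B₁ : C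
  B₀ : C
  left : A₁ ⟶ A₀
  right : B₁ ⟶ B₀
  top : A₁ ⟶ B₁
  bot : A₀ ⟶ B₀
  w : top ≫ right = left ≫ bot

/-- The square is a double extension. -/
def Sq.IsDE [HasFiniteLimits C] (s : Sq C) : Prop :=
  IsDoubleExt s.left s.right s.top s.bot

/-- A commutative cube, presented as a morphism of squares `Φ : s ⟶ t`. -/
structure SqHom (s t : Sq C) where
  h₁₁ : s.A₁ ⟶ t.A₁
  h₁₀ : s.A₀ ⟶ t.A₀
  h₀₁ : s.B₁ ⟶ t.B₁
  h₀₀ : s.B₀ ⟶ t.B₀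
  wA : h₁₁ ≫ t.left = s.left ≫ h₁₀
  wB : h₀₁ ≫ t.right = s.right ≫ h₀₀
  wt : h₁₁ ≫ t.top = s.top ≫ h₀₁
  wb : h₁₀ ≫ t.bot = s.bot ≫ h₀₀

/-- Composition of cubes (as morphisms of squares). -/
def SqHom.comp {s t u : Sq C} (Φ : SqHom s t) (Ψ : SqHom t u) : SqHom s u where
  h₁₁ := Φ.h₁₁ ≫ Ψ.h₁₁
  h₁₀ := Φ.h₁₀ ≫ Ψ.h₁₀
  h₀₁ := Φ.h₀₁ ≫ Ψ.h₀₁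
  h₀₀ := Φ.h₀₀ ≫ Ψ.h₀₀
  wA := by rw [Category.assoc, Ψ.wA, ← Category.assoc, Φ.wA, Category.assoc]
  wB := by rw [Category.assoc, Ψ.wB, ← Category.assoc, Φ.wB, Category.assoc]
  wt := by rw [Category.assoc, Ψ.wt, ← Category.assoc, Φ.wt, Category.assoc]
  wb := by rw [Category.assoc, Ψ.wb, ← Category.assoc, Φ.wb, Category.assoc]

section Cube
variable [HasFiniteLimits C]

/-- Seen as a morphism `(σ, β) : s ⟶ t` between the double extensions `s` (as the arrow
`s.left → s.right`) and `t`, the face `σ` of the cube: the square from `s.left` to `t.left`. -/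
def SqHom.sigmaSq {s t : Sq C} (Φ : SqHom s t) : Sq C where
  A₁ := s.A₁
  A₀ := s.A₀
  B₁ := t.A₁
  B₀ := t.A₀
  left := s.left
  right := t.left
  top := Φ.h₁₁
  bot := Φ.h₁₀
  w := Φ.wA

/-- The face `β` of the cube: the square from `s.right` to `t.right`. -/
def SqHom.betaSq {s t : Sq C} (Φ : SqHom s t) : Sq C where
  A₁ := s.B₁
  A₀ := s.B₀
  B₁ := t.B₁
  B₀ := t.B₀
  left := s.right
  right := t.right
  top := Φ.h₀₁
  bot := Φ.h₀₀
  w := Φ.wB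

/-- Top component of the componentwise pullback of `t` (i.e. `α`) and `betaSq Φ` (i.e. `β`). -/
noncomputable def SqHom.P₁ {s t : Sq C} (Φ : SqHom s t) : C := pullback t.top Φ.h₀₁

/-- Bottom component of the componentwise pullback of `α` and `β`. -/
noncomputable def SqHom.P₀ {s t : Sq C} (Φ : SqHom s t) : C := pullback t.bot Φ.h₀₀

/-- The induced arrow between the components of the componentwise pullback of `α` and `β`. -/
noncomputable def SqHom.fP {s t : Sq C} (Φ : SqHom s t) : Φ.P₁ ⟶ Φ.P₀ :=
  pullback.map t.top Φ.h₀₁ t.bot Φ.h₀₀ t.left s.right t.right t.w Φ.wB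

/-- The top comparison morphism. -/
noncomputable def SqHom.c₁ {s t : Sq C} (Φ : SqHom s t) : s.A₁ ⟶ Φ.P₁ :=
  pullback.lift Φ.h₁₁ s.top Φ.wt

/-- The bottom comparison morphism. -/
noncomputable def SqHom.c₀ {s t : Sq C} (Φ : SqHom s t) : s.A₀ ⟶ Φ.P₀ :=
  pullback.lift Φ.h₁₀ s.bot Φ.wb

lemma SqHom.comp_w {s t : Sq C} (Φ : SqHom s t) : Φ.c₁ ≫ Φ.fP = s.left ≫ Φ.c₀ := by
  apply pullback.hom_ext
  · erw [Category.assoc, Category.assoc, pullback.lift_fst, pullback.lift_fst, ← Category.assoc]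
    erw [pullback.lift_fst]
    exact Φ.wA
  · erw [Category.assoc, Category.assoc, pullback.lift_snd, pullback.lift_snd, ← Category.assoc]
    erw [pullback.lift_snd]
    exact s.w

/-- The comparison square of the cube `Φ`, from `s.left` to the componentwise pullback
of `α` and `β`. -/
noncomputable def SqHom.compSq {s t : Sq C} (Φ : SqHom s t) : Sq C where
  A₁ := s.A₁
  A₀ := s.A₀
  B₁ := Φ.P₁
  B₀ := Φ.P₀
  left := s.left
  right := Φ.fP
  top := Φ.c₁
  bot := Φ.c₀
  w := Φ.comp_w

/-- A `3`-cubical extension: the two opposite faces `γ = s` and `α = t`, the two connecting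
faces `σ` and `β`, and the comparison square to the componentwise pullback of `α` and `β`
are all double extensions. -/
def SqHom.Is3CubExt {s t : Sq C} (Φ : SqHom s t) : Prop :=
  s.IsDE ∧ t.IsDE ∧ Φ.sigmaSq.IsDE ∧ Φ.betaSq.IsDE ∧ Φ.compSq.IsDE

end Cube

/-- The cube `Φ : s ⟶ t` is a limit cube: the cone from the initial vertex `s.A₁` on the
diagram formed by the remaining seven vertices is a limit cone. -/
def SqHom.IsLimitCube {s t : Sq C} (Φ : SqHom s t) : Prop :=
  ∀ (W : C) (wA₀ : W ⟶ s.A₀) (wB₁ : W ⟶ s.B₁) (wtA₁ : W ⟶ t.A₁),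
    wA₀ ≫ s.bot = wB₁ ≫ s.right →
    wA₀ ≫ Φ.h₁₀ = wtA₁ ≫ t.left →
    wB₁ ≫ Φ.h₀₁ = wtA₁ ≫ t.top →
    ∃! u : W ⟶ s.A₁, u ≫ s.left = wA₀ ∧ u ≫ s.top = wB₁ ∧ u ≫ Φ.h₁₁ = wtA₁

/-- A discrete fibration (of order 3): a `3`-cubical extension which is a limit cube. -/
def SqHom.IsDiscFib [HasFiniteLimits C] {s t : Sq C} (Φ : SqHom s t) : Prop :=
  Φ.Is3CubExt ∧ Φ.IsLimitCube
section Galois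
variable [HasFiniteLimits C]

/-- A strongly E-Birkhoff Galois structure on `C`: a full replete reflective subcategory
(given by the predicate `inB`, the reflector `F` and the unit `η`) such that every unit
component is a regular epimorphism and every naturality square of the unit at a regular
epimorphism is a double extension. -/
structure BirkhoffStructure (C : Type u) [Category.{v} C] [HasFiniteLimits C] where
  inB : C → Prop
  replete : ∀ {X Y : C}, inB X → (X ≅ Y) → inB Y
  F : C ⥤ C
  η : 𝟭 C ⟶ F
  obj_inB : ∀ A : C, inB (F.obj A)
  unit_regEpi : ∀ A : C, IsRegEpi (η.app A)
  univ : ∀ {A X : C}, inB X → ∀ g : A ⟶ X, ∃! h : F.obj A ⟶ X, η.app A ≫ h = g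
  stronglyBirkhoff : ∀ {A B : C} (f : A ⟶ B), IsRegEpi f →
    IsDoubleExt f (F.map f) (η.app A) (η.app B)

/-- A trivial covering: a regular epimorphism whose unit naturality square is a pullback. -/
def TrivialCovering (G : BirkhoffStructure C) {T E : C} (t : T ⟶ E) : Prop :=
  IsRegEpi t ∧ IsPullback (G.η.app T) t (G.F.map t) (G.η.app E)

/-- A covering: a regular epimorphism whose pullback along some regular epimorphism is a
trivial covering. -/
def Covering (G : BirkhoffStructure C) {A B : C} (c : A ⟶ B) : Prop :=
  IsRegEpi c ∧ ∃ (E : C) (e : E ⟶ B), IsRegEpi e ∧ TrivialCovering G (pullback.snd c e)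

end Galois

/-- The underlying square in `C` of a morphism of `Ext C`. -/
def sqOfHom {f g : ExtCat C} (φ : f ⟶ g) : Sq C where
  A₁ := f.obj.left
  A₀ := f.obj.right
  B₁ := g.obj.left
  B₀ := g.obj.right
  left := f.obj.hom
  right := g.obj.hom
  top := ExtCat.homLeft φ
  bot := ExtCat.homRight φ
  w := ExtCat.hom_w φ

/-- The underlying cube in `C` of a naturality square in `Ext C` of a natural
transformation `η₁ : 𝟭 (Ext C) ⟶ F₁` at a morphism `φ : f ⟶ g` of `Ext C`. -/
def natCube (F₁ : ExtCat C ⥤ ExtCat C) (η₁ : 𝟭 (ExtCat C) ⟶ F₁) {f g : ExtCat C}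
    (φ : f ⟶ g) : SqHom (sqOfHom φ) (sqOfHom (F₁.map φ)) where
  h₁₁ := ExtCat.homLeft (η₁.app f)
  h₁₀ := ExtCat.homRight (η₁.app f)
  h₀₁ := ExtCat.homLeft (η₁.app g)
  h₀₀ := ExtCat.homRight (η₁.app g)
  wA := ExtCat.hom_w (η₁.app f)
  wB := ExtCat.hom_w (η₁.app g)
  wt := by
    have h := congrArg ExtCat.homLeft (η₁.naturality φ)
    rw [ExtCat.homLeft_comp, ExtCat.homLeft_comp] at h
    exact h.symm
  wb := by
    have h := congrArg ExtCat.homRight (η₁.naturality φ)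
    rw [ExtCat.homRight_comp, ExtCat.homRight_comp] at h
    exact h.symm

section LevelOne
variable [HasFiniteLimits C]

/-- The level-one Galois structure induced by a strongly E-Birkhoff Galois structure `G`:
the coverings form a reflective subcategory of `Ext C`, with reflector `F₁` and unit `η₁`,
every unit component is a double extension, and the reflection is strongly E₂-Birkhoff. -/
structure LevelOne (G : BirkhoffStructure C) where
  F₁ : ExtCat C ⥤ ExtCat C
  η₁ : 𝟭 (ExtCat C) ⟶ F₁
  obj_cov : ∀ f : ExtCat C, Covering G (F₁.obj f).obj.hom
  univ : ∀ {f x : ExtCat C}, Covering G x.obj.hom → ∀ g : f ⟶ x,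
    ∃! h : F₁.obj f ⟶ x, η₁.app f ≫ h = g
  unit_DE : ∀ f : ExtCat C, (sqOfHom (η₁.app f)).IsDE
  stronglyBirkhoff : ∀ {f g : ExtCat C} (φ : f ⟶ g), (sqOfHom φ).IsDE →
    (natCube F₁ η₁ φ).Is3CubExt

/-- A trivial double covering: a morphism of `Ext C` whose underlying square is a double
extension and whose `η₁`-naturality square is a pullback in `Ext C`. -/
def TrivDoubleCov {G : BirkhoffStructure C} (L : LevelOne G) {f g : ExtCat C}
    (φ : f ⟶ g) : Prop :=
  (sqOfHom φ).IsDE ∧ IsPullback (L.η₁.app f) φ (L.F₁.map φ) (L.η₁.app g)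

/-- A double covering: a double extension `α : d ⟶ c` in `Ext C` such that the pullback of
`α` along some double extension `γ : e ⟶ c` is a trivial double covering. -/
def DoubleCov {G : BirkhoffStructure C} (L : LevelOne G) {d c : ExtCat C}
    (α : d ⟶ c) : Prop :=
  (sqOfHom α).IsDE ∧ ∃ (e : ExtCat C) (γ : e ⟶ c), (sqOfHom γ).IsDE ∧
    ∃ (p : ExtCat C) (pγ : p ⟶ e) (pα : p ⟶ d),
      IsPullback pγ pα γ α ∧ TrivDoubleCov L pγ

end LevelOne
section StatementNineAux

lemma IsRegEpi.epi' {X Y : C} {f : X ⟶ Y} (h : IsRegEpi f) : Epi f := by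
  obtain ⟨h⟩ := h
  haveI := h
  exact RegularEpi.epi _ h

lemma ExtCat.hom_ext' {f g : ExtCat C} {α β : f ⟶ g}
    (h₁ : ExtCat.homLeft α = ExtCat.homLeft β)
    (h₂ : ExtCat.homRight α = ExtCat.homRight β) : α = β :=
  ObjectProperty.hom_ext _ (CommaMorphism.ext h₁ h₂)

@[simp] lemma ExtCat.homLeft_mk' {X₁ X₀ Y₁ Y₀ : C} {f : X₁ ⟶ X₀} {g : Y₁ ⟶ Y₀}
    {hf : IsRegEpi f} {hg : IsRegEpi g} (u : X₁ ⟶ Y₁) (v : X₀ ⟶ Y₀) (w : u ≫ g = f ≫ v) :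
    ExtCat.homLeft (ExtCat.homMk' (hf := hf) (hg := hg) u v w) = u := rfl

@[simp] lemma ExtCat.homRight_mk' {X₁ X₀ Y₁ Y₀ : C} {f : X₁ ⟶ X₀} {g : Y₁ ⟶ Y₀}
    {hf : IsRegEpi f} {hg : IsRegEpi g} (u : X₁ ⟶ Y₁) (v : X₀ ⟶ Y₀) (w : u ≫ g = f ≫ v) :
    ExtCat.homRight (ExtCat.homMk' (hf := hf) (hg := hg) u v w) = v := rfl

/-- Universal-property characterization of pushout squares. -/
lemma isPushout_iff_up {D : Type*} [Category D] {A B E P : D} {f : A ⟶ B} {g : A ⟶ E}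
    {h : B ⟶ P} {i : E ⟶ P} (w : f ≫ h = g ≫ i) :
    IsPushout f g h i ↔
      ∀ {W : D} (u : B ⟶ W) (v : E ⟶ W), f ≫ u = g ≫ v →
        ∃! t : P ⟶ W, h ≫ t = u ∧ i ≫ t = v := by
  constructor
  · intro hp W u v huv
    exact ⟨hp.desc u v huv, ⟨hp.inl_desc u v huv, hp.inr_desc u v huv⟩,
      fun t ht => hp.hom_ext (by rw [ht.1, hp.inl_desc]) (by rw [ht.2, hp.inr_desc])⟩
  · intro H
    refine IsPushout.of_isColimit' ⟨w⟩ (PushoutCocone.IsColimit.mk w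
      (fun s => (H s.inl s.inr s.condition).exists.choose)
      (fun s => (H s.inl s.inr s.condition).exists.choose_spec.1)
      (fun s => (H s.inl s.inr s.condition).exists.choose_spec.2)
      (fun s m h1 h2 => ?_))
    obtain ⟨t, ht, huniq⟩ := H s.inl s.inr s.condition
    have e1 : m = t := huniq m ⟨h1, h2⟩
    have e2 : (H s.inl s.inr s.condition).exists.choose = t :=
      huniq _ (H s.inl s.inr s.condition).exists.choose_spec
    rw [e1]; exact e2.symm

/-- Composing a regular epimorphism with an isomorphism gives a regular epimorphism. -/
lemma IsRegEpi.comp_isIso {X Y Z : C} {f : X ⟶ Y} (hf : IsRegEpi f) (g : Y ⟶ Z) [IsIso g] :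
    IsRegEpi (f ≫ g) := by
  obtain ⟨r⟩ := hf
  haveI := RegularEpi.epi _ r
  have w' : r.left ≫ f ≫ g = r.right ≫ f ≫ g := by
    rw [← Category.assoc, r.w, Category.assoc]
  refine ⟨⟨r.W, r.left, r.right, w', ?_⟩⟩
  refine Cofork.IsColimit.mk _
    (fun s => inv g ≫ Cofork.IsColimit.desc r.isColimit s.π s.condition) (fun s => ?_)
    (fun s m hm => ?_)
  · have hd : f ≫ Cofork.IsColimit.desc r.isColimit s.π s.condition = s.π := by
      simpa using Cofork.IsColimit.π_desc' r.isColimit s.π s.condition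
    simp [hd]
  · haveI : Epi (f ≫ g) := epi_comp _ _
    apply (cancel_epi (f ≫ g)).1
    have hd : f ≫ Cofork.IsColimit.desc r.isColimit s.π s.condition = s.π := by
      simpa using Cofork.IsColimit.π_desc' r.isColimit s.π s.condition
    simp only [Cofork.π_ofπ] at hm
    simp [hm, hd]

section RegularLemmas
variable [HasFiniteLimits C] [RegularCat C]

omit [RegularCat C] in
/-- Descending a morphism coequalizing the kernel pair of a regular epimorphism. -/
lemma IsRegEpi.descend {X Y Z : C} {f : X ⟶ Y} (hf : IsRegEpi f)
    (h : X ⟶ Z) (hcomm : pullback.fst f f ≫ h = pullback.snd f f ≫ h) :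
    ∃ d : Y ⟶ Z, f ≫ d = h := by
  obtain ⟨r⟩ := hf
  have h1 : pullback.lift r.left r.right r.w ≫ pullback.fst f f = r.left :=
    pullback.lift_fst _ _ _
  have h2 : pullback.lift r.left r.right r.w ≫ pullback.snd f f = r.right :=
    pullback.lift_snd _ _ _
  have hw : r.left ≫ h = r.right ≫ h := by
    calc r.left ≫ h = pullback.lift r.left r.right r.w ≫ pullback.fst f f ≫ h := by
          rw [← Category.assoc, h1]
      _ = pullback.lift r.left r.right r.w ≫ pullback.snd f f ≫ h := by rw [hcomm]
      _ = r.right ≫ h := by rw [← Category.assoc, h2]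
  exact ⟨Cofork.IsColimit.desc r.isColimit h hw,
    by simpa using Cofork.IsColimit.π_desc' r.isColimit h hw⟩

/-- Regular epi - mono factorization in a regular category. -/
lemma exists_image {X Y : C} (f : X ⟶ Y) :
    ∃ (I : C) (e : X ⟶ I) (m : I ⟶ Y), IsRegEpi e ∧ Mono m ∧ e ≫ m = f := by
  haveI := RegularCat.hasCoeqOfKernelPairs (C := C) f
  refine ⟨coequalizer (pullback.fst f f) (pullback.snd f f),
    coequalizer.π _ _, coequalizer.desc f pullback.condition, ⟨coequalizerRegular _ _⟩, ?_,
    coequalizer.π_desc _ _⟩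
  set e : X ⟶ coequalizer (pullback.fst f f) (pullback.snd f f) := coequalizer.π _ _ with he
  set m : coequalizer (pullback.fst f f) (pullback.snd f f) ⟶ Y :=
    coequalizer.desc f pullback.condition with hm
  have hem : e ≫ m = f := coequalizer.π_desc _ _
  have hregE : IsRegEpi e := ⟨coequalizerRegular _ _⟩
  -- the comparison `k` from the kernel pair of `f` to `pullback f m`
  have hk0 : pullback.fst f f ≫ f = (pullback.snd f f ≫ e) ≫ m := by
    rw [Category.assoc, hem]; exact pullback.condition
  set k : pullback f f ⟶ pullback f m := pullback.lift _ _ hk0 with hk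
  have hk1 : k ≫ pullback.fst f m = pullback.fst f f := pullback.lift_fst _ _ _
  have hk2 : k ≫ pullback.snd f m = pullback.snd f f ≫ e := pullback.lift_snd _ _ _
  -- the comparison `s` from `pullback f m` to the kernel pair of `m`
  have hs0 : (pullback.fst f m ≫ e) ≫ m = pullback.snd f m ≫ m := by
    rw [Category.assoc, hem]; exact pullback.condition
  set s : pullback f m ⟶ pullback m m := pullback.lift _ _ hs0 with hs
  have hs1 : s ≫ pullback.fst m m = pullback.fst f m ≫ e := pullback.lift_fst _ _ _
  have hs2 : s ≫ pullback.snd m m = pullback.snd f m := pullback.lift_snd _ _ _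
  -- `k` is the pullback of `e` along `pullback.snd f m`, hence an epimorphism
  have epik : Epi k := by
    have ck : pullback.snd f f ≫ e = k ≫ pullback.snd f m := hk2.symm
    have hPBk : IsPullback (pullback.snd f f) k e (pullback.snd f m) := by
      refine IsPullback.of_isLimit (PullbackCone.IsLimit.mk ck
        (fun c => pullback.lift (c.snd ≫ pullback.fst f m) c.fst ?_)
        (fun c => pullback.lift_snd _ _ _) (fun c => ?_) (fun c m' hm1 hm2 => ?_)
        )
      · calc (c.snd ≫ pullback.fst f m) ≫ f = c.snd ≫ pullback.fst f m ≫ f :=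
              Category.assoc _ _ _
          _ = c.snd ≫ pullback.snd f m ≫ m := by rw [pullback.condition]
          _ = (c.snd ≫ pullback.snd f m) ≫ m := (Category.assoc _ _ _).symm
          _ = (c.fst ≫ e) ≫ m := by rw [c.condition]
          _ = c.fst ≫ f := by rw [Category.assoc, hem]
      · apply pullback.hom_ext
        · rw [Category.assoc, hk1, pullback.lift_fst]
        · rw [Category.assoc, hk2, ← Category.assoc, pullback.lift_snd, c.condition]
      · apply pullback.hom_ext
        · rw [pullback.lift_fst]
          calc m' ≫ pullback.fst f f = m' ≫ k ≫ pullback.fst f m := by rw [hk1]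
            _ = (m' ≫ k) ≫ pullback.fst f m := (Category.assoc _ _ _).symm
            _ = c.snd ≫ pullback.fst f m := by rw [hm2]
        · rw [pullback.lift_snd]; exact hm1
    have hst : IsRegEpi (pullback.snd e (pullback.snd f m)) :=
      RegularCat.regEpiPullbackStable e _ hregE
    have := hst.epi'
    rw [← hPBk.isoPullback_hom_snd]
    exact epi_comp _ _
  -- `s` is the pullback of `e` along `pullback.fst m m`, hence an epimorphism
  have epis : Epi s := by
    have cs : pullback.fst f m ≫ e = s ≫ pullback.fst m m := hs1.symm
    have hPBs : IsPullback (pullback.fst f m) s e (pullback.fst m m) := by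
      refine IsPullback.of_isLimit (PullbackCone.IsLimit.mk cs
        (fun c => pullback.lift c.fst (c.snd ≫ pullback.snd m m) ?_)
        (fun c => pullback.lift_fst _ _ _) (fun c => ?_) (fun c m' hm1 hm2 => ?_)
        )
      · calc c.fst ≫ f = c.fst ≫ e ≫ m := by rw [hem]
          _ = (c.fst ≫ e) ≫ m := (Category.assoc _ _ _).symm
          _ = (c.snd ≫ pullback.fst m m) ≫ m := by rw [c.condition]
          _ = c.snd ≫ pullback.fst m m ≫ m := Category.assoc _ _ _
          _ = c.snd ≫ pullback.snd m m ≫ m := by rw [pullback.condition]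
          _ = (c.snd ≫ pullback.snd m m) ≫ m := (Category.assoc _ _ _).symm
      · apply pullback.hom_ext
        · rw [Category.assoc, hs1, ← Category.assoc, pullback.lift_fst, c.condition]
        · rw [Category.assoc, hs2, pullback.lift_snd]
      · apply pullback.hom_ext
        · rw [pullback.lift_fst]; exact hm1
        · rw [pullback.lift_snd]
          calc m' ≫ pullback.snd f m = m' ≫ s ≫ pullback.snd m m := by rw [hs2]
            _ = (m' ≫ s) ≫ pullback.snd m m := (Category.assoc _ _ _).symm
            _ = c.snd ≫ pullback.snd m m := by rw [hm2]
    have hst : IsRegEpi (pullback.snd e (pullback.fst m m)) :=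
      RegularCat.regEpiPullbackStable e _ hregE
    have := hst.epi'
    rw [← hPBs.isoPullback_hom_snd]
    exact epi_comp _ _
  -- hence the two projections of the kernel pair of `m` agree
  have hfs : pullback.fst m m = pullback.snd m m := by
    haveI : Epi (k ≫ s) := epi_comp _ _
    apply (cancel_epi (k ≫ s)).1
    have e1 : (k ≫ s) ≫ pullback.fst m m = pullback.fst f f ≫ e := by
      rw [Category.assoc, hs1, ← Category.assoc, hk1]
    have e2 : (k ≫ s) ≫ pullback.snd m m = pullback.snd f f ≫ e := by
      rw [Category.assoc, hs2, hk2]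
    rw [e1, e2, coequalizer.condition]
  -- and `m` is a monomorphism
  refine ⟨fun {Z} α β hab => ?_⟩
  calc α = pullback.lift α β hab ≫ pullback.fst m m := (pullback.lift_fst _ _ _).symm
    _ = pullback.lift α β hab ≫ pullback.snd m m := by rw [hfs]
    _ = β := pullback.lift_snd _ _ _

/-- In a regular category, strong epimorphisms are regular. -/
lemma isRegEpi_of_strongEpi {X Y : C} (f : X ⟶ Y) [StrongEpi f] : IsRegEpi f := by
  obtain ⟨I, e, m, he, hm, hem⟩ := exists_image f
  haveI : Mono m := hm
  haveI : StrongEpi (e ≫ m) := by rw [hem]; infer_instance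
  haveI : StrongEpi m := strongEpi_of_strongEpi (f := e) (g := m)
  haveI : IsIso m := isIso_of_mono_of_strongEpi m
  rw [← hem]
  exact he.comp_isIso m

/-- The second factor of a regular epimorphism is a regular epimorphism. -/
lemma isRegEpi_of_comp' {X Y Z : C} (e : X ⟶ Y) (q : Y ⟶ Z)
    (h : IsRegEpi (e ≫ q)) : IsRegEpi q := by
  obtain ⟨r⟩ := h
  haveI := isRegularEpi_of_regularEpi r
  haveI : StrongEpi q := strongEpi_of_strongEpi (f := e) (g := q)
  exact isRegEpi_of_strongEpi q

end RegularLemmas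

end StatementNineAux


/-- In a Barr exact category, a commutative square in `Ext C` of double
extensions, in which the codomain component of `z_B` is an identity, is a pushout in
`Ext C` iff the induced square between the domains is a pushout in `C`. -/
theorem statement_9 {C : Type u} [Category.{v} C] [HasFiniteLimits C] [BarrExact C]
    {A₁ A₀ A'₁ A'₀ B₁ B'₁ B₀ : C}
    -- the four objects of `Ext C`:
    (a : A₁ ⟶ A₀) (a' : A'₁ ⟶ A'₀) (b : B₁ ⟶ B₀) (b' : B'₁ ⟶ B₀)
    -- the four sides, all double extensions, with the codomain component of `z_B` an
    -- identity:
    (zAt : A₁ ⟶ A'₁) (zAb : A₀ ⟶ A'₀) (hzA : IsDoubleExt a a' zAt zAb)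
    (zBt : B₁ ⟶ B'₁) (hzB : IsDoubleExt b b' zBt (𝟙 B₀))
    (φt : A₁ ⟶ B₁) (φb : A₀ ⟶ B₀) (hφ : IsDoubleExt a b φt φb)
    (φ't : A'₁ ⟶ B'₁) (φ'b : A'₀ ⟶ B₀) (hφ' : IsDoubleExt a' b' φ't φ'b)
    -- commutativity of the square in `Ext C`:
    (wtop : zAt ≫ φ't = φt ≫ zBt) (wbot : zAb ≫ φ'b = φb ≫ 𝟙 B₀) :
    -- the square `φ̄ ∘ z_A = z_B ∘ φ` is a pushout in `Ext C` iff the square of domain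
    -- components is a pushout in `C`:
    IsPushout (ExtCat.homMk' (hf := hzA.left) (hg := hzA.right) zAt zAb hzA.w)
        (ExtCat.homMk' (hf := hzA.left) (hg := hφ.right) φt φb hφ.w)
        (ExtCat.homMk' (hf := hzA.right) (hg := hφ'.right) φ't φ'b hφ'.w)
        (ExtCat.homMk' (hf := hφ.right) (hg := hφ'.right) zBt (𝟙 B₀) hzB.w) ↔
      IsPushout zAt φt φ't zBt := by
  have epiZAt : Epi zAt := hzA.top.epi'
  have epiZBt : Epi zBt := hzB.top.epi'
  have epiZAb : Epi zAb := hzA.bot.epi'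
  have hzb' : zBt ≫ b' = b := by simpa using hzB.w
  have hbb : zAb ≫ φ'b = φb := by simpa using wbot
  constructor
  · -- from a pushout in `Ext C` to a pushout of the domain components
    intro hpo
    refine (isPushout_iff_up wtop).mpr ?_
    intro W u v huv
    have key : φt ≫ b = zAt ≫ a' ≫ φ'b := by
      rw [hφ.w, ← hbb, ← Category.assoc, ← hzA.w, Category.assoc]
    -- an auxiliary extension through which `v` and `b` jointly factor
    obtain ⟨I, e, vW, q, hevW, heq, hjoint⟩ :
        ∃ (I : C) (e : B₁ ⟶ I) (vW : I ⟶ W) (q : I ⟶ B₀),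
          e ≫ vW = v ∧ e ≫ q = b ∧
          ∀ {T : C} (g₁ g₂ : T ⟶ B₁), g₁ ≫ v = g₂ ≫ v → g₁ ≫ b = g₂ ≫ b →
            g₁ ≫ e = g₂ ≫ e := by
      haveI := RegularCat.hasCoeqOfKernelPairs (C := C) (prod.lift v b)
      have hv' : pullback.fst (prod.lift v b) (prod.lift v b) ≫ v =
          pullback.snd (prod.lift v b) (prod.lift v b) ≫ v := by
        have h := pullback.condition (f := prod.lift v b) (g := prod.lift v b)
        calc pullback.fst (prod.lift v b) (prod.lift v b) ≫ v
            = pullback.fst (prod.lift v b) (prod.lift v b) ≫ prod.lift v b ≫ prod.fst := by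
              rw [prod.lift_fst]
          _ = (pullback.fst (prod.lift v b) (prod.lift v b) ≫ prod.lift v b) ≫ prod.fst :=
              (Category.assoc _ _ _).symm
          _ = (pullback.snd (prod.lift v b) (prod.lift v b) ≫ prod.lift v b) ≫ prod.fst := by
              rw [h]
          _ = pullback.snd (prod.lift v b) (prod.lift v b) ≫ prod.lift v b ≫ prod.fst :=
              Category.assoc _ _ _
          _ = pullback.snd (prod.lift v b) (prod.lift v b) ≫ v := by rw [prod.lift_fst]
      have hb' : pullback.fst (prod.lift v b) (prod.lift v b) ≫ b =
          pullback.snd (prod.lift v b) (prod.lift v b) ≫ b := by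
        have h := pullback.condition (f := prod.lift v b) (g := prod.lift v b)
        calc pullback.fst (prod.lift v b) (prod.lift v b) ≫ b
            = pullback.fst (prod.lift v b) (prod.lift v b) ≫ prod.lift v b ≫ prod.snd := by
              rw [prod.lift_snd]
          _ = (pullback.fst (prod.lift v b) (prod.lift v b) ≫ prod.lift v b) ≫ prod.snd :=
              (Category.assoc _ _ _).symm
          _ = (pullback.snd (prod.lift v b) (prod.lift v b) ≫ prod.lift v b) ≫ prod.snd := by
              rw [h]
          _ = pullback.snd (prod.lift v b) (prod.lift v b) ≫ prod.lift v b ≫ prod.snd :=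
              Category.assoc _ _ _
          _ = pullback.snd (prod.lift v b) (prod.lift v b) ≫ b := by rw [prod.lift_snd]
      refine ⟨coequalizer _ _, coequalizer.π _ _, coequalizer.desc v hv',
        coequalizer.desc b hb', coequalizer.π_desc _ _, coequalizer.π_desc _ _,
        fun {T} g₁ g₂ hgv hgb => ?_⟩
      have hgF : g₁ ≫ prod.lift v b = g₂ ≫ prod.lift v b := by
        apply Limits.prod.hom_ext
        · rw [Category.assoc, Category.assoc, prod.lift_fst]; exact hgv
        · rw [Category.assoc, Category.assoc, prod.lift_snd]; exact hgb
      have hl1 : pullback.lift g₁ g₂ hgF ≫ pullback.fst (prod.lift v b) (prod.lift v b) = g₁ :=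
        pullback.lift_fst _ _ _
      have hl2 : pullback.lift g₁ g₂ hgF ≫ pullback.snd (prod.lift v b) (prod.lift v b) = g₂ :=
        pullback.lift_snd _ _ _
      calc g₁ ≫ coequalizer.π _ _
          = pullback.lift g₁ g₂ hgF ≫ pullback.fst (prod.lift v b) (prod.lift v b) ≫
            coequalizer.π _ _ := by rw [← Category.assoc, hl1]
        _ = pullback.lift g₁ g₂ hgF ≫ pullback.snd (prod.lift v b) (prod.lift v b) ≫
            coequalizer.π _ _ := by rw [coequalizer.condition]
        _ = g₂ ≫ coequalizer.π _ _ := by rw [← Category.assoc, hl2]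
    have hregq : IsRegEpi q := isRegEpi_of_comp' e q (by rw [heq]; exact hφ.right)
    -- descend `φt ≫ e` along `zAt`
    have hk12 : ∀ {T : C} (y : A'₁ ⟶ T),
        pullback.fst zAt zAt ≫ zAt ≫ y = pullback.snd zAt zAt ≫ zAt ≫ y := by
      intro T y
      rw [← Category.assoc, pullback.condition, Category.assoc]
    have hkt : pullback.fst zAt zAt ≫ (φt ≫ e) = pullback.snd zAt zAt ≫ (φt ≫ e) := by
      have h1 : (pullback.fst zAt zAt ≫ φt) ≫ v = (pullback.snd zAt zAt ≫ φt) ≫ v := by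
        rw [Category.assoc, Category.assoc, ← huv]
        exact hk12 u
      have h2 : (pullback.fst zAt zAt ≫ φt) ≫ b = (pullback.snd zAt zAt ≫ φt) ≫ b := by
        rw [Category.assoc, Category.assoc, key]
        exact hk12 (a' ≫ φ'b)
      have := hjoint _ _ h1 h2
      rw [Category.assoc, Category.assoc] at this
      exact this
    obtain ⟨ut, hut⟩ := hzA.top.descend (φt ≫ e) hkt
    have hutq : ut ≫ q = a' ≫ φ'b := by
      apply (cancel_epi zAt).1
      calc zAt ≫ ut ≫ q = (zAt ≫ ut) ≫ q := (Category.assoc _ _ _).symm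
        _ = (φt ≫ e) ≫ q := by rw [hut]
        _ = φt ≫ e ≫ q := Category.assoc _ _ _
        _ = φt ≫ b := by rw [heq]
        _ = zAt ≫ a' ≫ φ'b := key
    have hvq : e ≫ q = b ≫ 𝟙 B₀ := by rw [Category.comp_id, heq]
    -- apply the pushout in `Ext C`
    have hcomm : (ExtCat.homMk' (hf := hzA.left) (hg := hzA.right) zAt zAb hzA.w) ≫
          (ExtCat.homMk' (hf := hzA.right) (hg := hregq) ut φ'b hutq) =
        (ExtCat.homMk' (hf := hzA.left) (hg := hφ.right) φt φb hφ.w) ≫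
          (ExtCat.homMk' (hf := hφ.right) (hg := hregq) e (𝟙 B₀) hvq) := by
      apply ExtCat.hom_ext'
      · show zAt ≫ ut = φt ≫ e
        exact hut
      · show zAb ≫ φ'b = φb ≫ 𝟙 B₀
        exact wbot
    set wbar := hpo.desc _ _ hcomm with hwbar
    have h1 := hpo.inl_desc _ _ hcomm
    have h2 := hpo.inr_desc _ _ hcomm
    rw [← hwbar] at h1 h2
    have hw1 : φ't ≫ ExtCat.homLeft wbar = ut := by
      have := congrArg ExtCat.homLeft h1
      rw [ExtCat.homLeft_comp] at this
      exact this
    have hw2 : zBt ≫ ExtCat.homLeft wbar = e := by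
      have := congrArg ExtCat.homLeft h2
      rw [ExtCat.homLeft_comp] at this
      exact this
    refine ⟨ExtCat.homLeft wbar ≫ vW, ⟨?_, ?_⟩, ?_⟩
    · apply (cancel_epi zAt).1
      calc zAt ≫ φ't ≫ ExtCat.homLeft wbar ≫ vW
          = (zAt ≫ φ't) ≫ ExtCat.homLeft wbar ≫ vW := (Category.assoc _ _ _).symm
        _ = (φt ≫ zBt) ≫ ExtCat.homLeft wbar ≫ vW := by rw [wtop]
        _ = φt ≫ (zBt ≫ ExtCat.homLeft wbar) ≫ vW := by
            exact (Category.assoc _ _ _).trans (congrArg (φt ≫ ·) (Category.assoc _ _ _).symm)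
        _ = φt ≫ e ≫ vW := by rw [hw2]; rfl
        _ = φt ≫ v := by rw [hevW]
        _ = zAt ≫ u := huv.symm
    · exact (Category.assoc _ _ _).symm.trans ((congrArg (· ≫ vW) hw2).trans hevW)
    · intro t' ht'
      apply (cancel_epi zBt).1
      rw [ht'.2]; exact ((Category.assoc _ _ _).symm.trans ((congrArg (· ≫ vW) hw2).trans hevW)).symm
  · -- from a pushout of the domain components to a pushout in `Ext C`
    intro hp
    have wExt : (ExtCat.homMk' (hf := hzA.left) (hg := hzA.right) zAt zAb hzA.w) ≫
          (ExtCat.homMk' (hf := hzA.right) (hg := hφ'.right) φ't φ'b hφ'.w) =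
        (ExtCat.homMk' (hf := hzA.left) (hg := hφ.right) φt φb hφ.w) ≫
          (ExtCat.homMk' (hf := hφ.right) (hg := hφ'.right) zBt (𝟙 B₀) hzB.w) := by
      apply ExtCat.hom_ext'
      · show zAt ≫ φ't = φt ≫ zBt
        exact wtop
      · show zAb ≫ φ'b = φb ≫ 𝟙 B₀
        exact wbot
    refine (isPushout_iff_up wExt).mpr ?_
    intro x ubar vbar hcomm
    have hct : zAt ≫ ExtCat.homLeft ubar = φt ≫ ExtCat.homLeft vbar := by
      have := congrArg ExtCat.homLeft hcomm
      rw [ExtCat.homLeft_comp, ExtCat.homLeft_comp] at this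
      exact this
    have hcb : zAb ≫ ExtCat.homRight ubar = φb ≫ ExtCat.homRight vbar := by
      have := congrArg ExtCat.homRight hcomm
      rw [ExtCat.homRight_comp, ExtCat.homRight_comp] at this
      exact this
    obtain ⟨wt, ⟨hwt1, hwt2⟩, hwuniq⟩ :=
      (isPushout_iff_up wtop).mp hp (ExtCat.homLeft ubar) (ExtCat.homLeft vbar) hct
    have hb2 : φ'b ≫ ExtCat.homRight vbar = ExtCat.homRight ubar := by
      apply (cancel_epi zAb).1
      calc zAb ≫ φ'b ≫ ExtCat.homRight vbar
          = (zAb ≫ φ'b) ≫ ExtCat.homRight vbar := (Category.assoc _ _ _).symm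
        _ = φb ≫ ExtCat.homRight vbar := by rw [hbb]
        _ = zAb ≫ ExtCat.homRight ubar := hcb.symm
    have hvw : ExtCat.homLeft vbar ≫ x.obj.hom = b ≫ ExtCat.homRight vbar :=
      ExtCat.hom_w vbar
    have hsq : wt ≫ x.obj.hom = b' ≫ ExtCat.homRight vbar := by
      apply (cancel_epi zBt).1
      calc zBt ≫ wt ≫ x.obj.hom = (zBt ≫ wt) ≫ x.obj.hom := (Category.assoc _ _ _).symm
        _ = (ExtCat.homLeft vbar ≫ x.obj.hom : B₁ ⟶ x.obj.right) := by rw [hwt2]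
        _ = b ≫ ExtCat.homRight vbar := hvw
        _ = (zBt ≫ b') ≫ ExtCat.homRight vbar := by rw [hzb']
        _ = zBt ≫ b' ≫ ExtCat.homRight vbar := Category.assoc _ _ _
    refine ⟨show ExtCat.mk' b' hφ'.right ⟶ x from
      ObjectProperty.homMk (Arrow.homMk (u := wt) (v := (show B₀ ⟶ x.obj.right from ExtCat.homRight vbar)) hsq), ⟨?_, ?_⟩, ?_⟩
    · apply ExtCat.hom_ext'
      · show φ't ≫ wt = ExtCat.homLeft ubar
        exact hwt1
      · show φ'b ≫ ExtCat.homRight vbar = ExtCat.homRight ubar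
        exact hb2
    · apply ExtCat.hom_ext'
      · show zBt ≫ wt = ExtCat.homLeft vbar
        exact hwt2
      · show 𝟙 B₀ ≫ ExtCat.homRight vbar = ExtCat.homRight vbar
        exact Category.id_comp _
    · intro t' ht'
      apply ExtCat.hom_ext'
      · have e1 : φ't ≫ ExtCat.homLeft t' = ExtCat.homLeft ubar := by
          have := congrArg ExtCat.homLeft ht'.1
          rw [ExtCat.homLeft_comp] at this
          exact this
        have e2 : zBt ≫ ExtCat.homLeft t' = ExtCat.homLeft vbar := by
          have := congrArg ExtCat.homLeft ht'.2
          rw [ExtCat.homLeft_comp] at this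
          exact this
        exact hwuniq _ ⟨e1, e2⟩
      · have e3 := congrArg ExtCat.homRight ht'.2
        rw [ExtCat.homRight_comp] at e3
        exact (Category.id_comp (ExtCat.homRight t')).symm.trans e3

end Paper
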